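/- (Probit-Gaussian orthogonalized marginalization) Suppose Xₜ = gₜ(āₜ₋₁, X̄ₜ₋₁) + εₜ with εₜ ~ N(0, σₜ²) independent, and P(Y = 1 | Ā, X̃) = Φ(α + βᵀĀ + λᵀX̃), where X̃ₜ = Xₜ − gₜ. Then the g-formula ψ(ā) = ∫⋯∫ Φ(α + βᵀā + Σₜ λₜ(xₜ − gₜ)) Πₜ p(xₜ | x̄ₜ₋₁, āₜ₋₁) dx₁⋯dx_T equals Φ((α + βᵀā)/√(1 + σ²)) with σ² = Σₜ λₜ² σₜ². Hence ψ follows a probit model with coefficients θ = β/√(1 + σ²). -/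

import Mathlib

open MeasureTheory ProbabilityTheory
open scoped NNReal ENNReal
open Real

/-- The standard normal CDF Φ. -/
noncomputable def stdNormalCDF (x : ℝ) : ℝ := ((gaussianReal 0 1) (Set.Iic x)).toReal


lemma pdf_mul (a b : ℝ≥0) (ha : a ≠ 0) (hb : b ≠ 0) (z : ℝ) :
    (fun x => gaussianPDFReal 0 a x * gaussianPDFReal 0 b (z - x)) =
    fun x => gaussianPDFReal 0 (a + b) z *
      gaussianPDFReal ((a : ℝ) * z / ((a : ℝ) + b)) (a * b / (a + b)) x := by
  have hA : (0:ℝ) < a := lt_of_le_of_ne a.coe_nonneg (by exact_mod_cast ha.symm)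
  have hB : (0:ℝ) < b := lt_of_le_of_ne b.coe_nonneg (by exact_mod_cast hb.symm)
  have hW : ((a * b / (a + b) : ℝ≥0) : ℝ) = (a:ℝ) * b / ((a:ℝ) + b) := by push_cast; ring
  funext x
  simp only [gaussianPDFReal, hW, NNReal.coe_add, sub_zero]
  rw [mul_mul_mul_comm, mul_mul_mul_comm ((√(2 * π * ((a:ℝ)+b)))⁻¹)]
  congr 1
  · rw [← mul_inv, ← mul_inv, ← Real.sqrt_mul (by positivity), ← Real.sqrt_mul (by positivity)]
    congr 1
    field_simp
  · rw [← Real.exp_add, ← Real.exp_add]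
    congr 1
    field_simp
    ring

lemma nnz (a b : ℝ≥0) (ha : a ≠ 0) (hb : b ≠ 0) : a * b / (a + b) ≠ 0 := by
  have : (0:ℝ) < (a:ℝ) * b / ((a:ℝ) + b) := by
    have hA : (0:ℝ) < a := lt_of_le_of_ne a.coe_nonneg (by exact_mod_cast ha.symm)
    have hB : (0:ℝ) < b := lt_of_le_of_ne b.coe_nonneg (by exact_mod_cast hb.symm)
    positivity
  have hcoe : ((a * b / (a + b) : ℝ≥0) : ℝ) = (a:ℝ) * (b:ℝ) / ((a:ℝ) + (b:ℝ)) := by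
    push_cast; ring
  exact fun h => this.ne' (by rw [← hcoe, h, NNReal.coe_zero])

lemma lint_conv (a b : ℝ≥0) (ha : a ≠ 0) (hb : b ≠ 0) (z : ℝ) :
    ∫⁻ x, gaussianPDF 0 a x * gaussianPDF x b z = gaussianPDF 0 (a + b) z := by
  have hsym : ∀ x, gaussianPDFReal x b z = gaussianPDFReal 0 b (z - x) := by
    intro x; simp [gaussianPDFReal, sub_zero]
  have hint : Integrable (fun x => gaussianPDFReal 0 a x * gaussianPDFReal 0 b (z - x)) := by
    rw [pdf_mul a b ha hb z]
    exact (integrable_gaussianPDFReal _ _).const_mul _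
  calc ∫⁻ x, gaussianPDF 0 a x * gaussianPDF x b z
      = ∫⁻ x, ENNReal.ofReal (gaussianPDFReal 0 a x * gaussianPDFReal 0 b (z - x)) := by
        simp_rw [gaussianPDF, hsym, ENNReal.ofReal_mul (gaussianPDFReal_nonneg 0 a _)]
    _ = ENNReal.ofReal (∫ x, gaussianPDFReal 0 a x * gaussianPDFReal 0 b (z - x)) := by
        rw [← ofReal_integral_eq_lintegral_ofReal hint
          (ae_of_all _ fun x => mul_nonneg (gaussianPDFReal_nonneg _ _ _)
            (gaussianPDFReal_nonneg _ _ _))]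
    _ = gaussianPDF 0 (a + b) z := by
        rw [pdf_mul a b ha hb z, MeasureTheory.integral_const_mul,
          integral_gaussianPDFReal_eq_one _ (nnz a b ha hb), mul_one]
        rfl

lemma gauss_conv (a b : ℝ≥0) (ha : a ≠ 0) (hb : b ≠ 0) :
    Measure.map (fun p : ℝ × ℝ => p.1 + p.2) ((gaussianReal 0 a).prod (gaussianReal 0 b))
      = gaussianReal 0 (a + b) := by
  have hf : Measurable (fun p : ℝ × ℝ => p.1 + p.2) := measurable_fst.add measurable_snd
  ext s hs
  rw [Measure.map_apply hf hs, Measure.prod_apply (hf hs)]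
  have h1 : ∀ x : ℝ, (gaussianReal 0 b) (Prod.mk x ⁻¹' ((fun p : ℝ × ℝ => p.1 + p.2) ⁻¹' s))
      = ∫⁻ z in s, gaussianPDF x b z := by
    intro x
    have : Prod.mk x ⁻¹' ((fun p : ℝ × ℝ => p.1 + p.2) ⁻¹' s) = (fun y => x + y) ⁻¹' s := rfl
    rw [this, ← Measure.map_apply (measurable_const_add x) hs, gaussianReal_map_const_add,
      zero_add, gaussianReal_apply _ hb]
  simp_rw [h1]
  have hmeas : Measurable (Function.uncurry fun x z => gaussianPDF 0 a x * gaussianPDF x b z) := by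
    refine Measurable.mul (f := fun p : ℝ × ℝ => gaussianPDF 0 a p.1) (g := fun p : ℝ × ℝ => gaussianPDF p.1 b p.2) ?_ ?_
    · exact (measurable_gaussianPDF 0 a).comp measurable_fst
    · unfold gaussianPDF gaussianPDFReal
      exact (measurable_const.mul (((measurable_snd.sub measurable_fst).pow_const 2).neg.div_const
        _).exp).ennreal_ofReal
  rw [gaussianReal_of_var_ne_zero _ ha,
    lintegral_withDensity_eq_lintegral_mul _ (measurable_gaussianPDF 0 a) ?_]
  · calc ∫⁻ x, gaussianPDF 0 a x * ∫⁻ z in s, gaussianPDF x b z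
        = ∫⁻ x, ∫⁻ z in s, gaussianPDF 0 a x * gaussianPDF x b z := by
          refine lintegral_congr fun x => ?_
          rw [lintegral_const_mul _ ((measurable_gaussianPDF x b))]
      _ = ∫⁻ z in s, ∫⁻ x, gaussianPDF 0 a x * gaussianPDF x b z := by
          exact lintegral_lintegral_swap hmeas.aemeasurable
      _ = ∫⁻ z in s, gaussianPDF 0 (a + b) z := by
          refine lintegral_congr fun z => lint_conv a b ha hb z
      _ = gaussianReal 0 (a + b) s := (gaussianReal_apply _ (by simp [ha]) s).symm
  · have hm2 : Measurable (Function.uncurry fun x z => gaussianPDF x b z) := by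
      unfold Function.uncurry gaussianPDF gaussianPDFReal
      exact (measurable_const.mul (((measurable_snd.sub measurable_fst).pow_const
        2).neg.div_const _).exp).ennreal_ofReal
    exact hm2.lintegral_prod_right


lemma stdNormalCDF_mono : Monotone stdNormalCDF := fun x y h =>
  ENNReal.toReal_mono (measure_ne_top _ _) (measure_mono (Set.Iic_subset_Iic.2 h))

lemma stdNormalCDF_meas : Measurable stdNormalCDF := stdNormalCDF_mono.measurable

lemma stdNormalCDF_nonneg (x : ℝ) : 0 ≤ stdNormalCDF x := ENNReal.toReal_nonneg

lemma stdNormalCDF_le_one (x : ℝ) : stdNormalCDF x ≤ 1 := by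
  have : (gaussianReal 0 1) (Set.Iic x) ≤ 1 := prob_le_one
  simpa [stdNormalCDF] using ENNReal.toReal_le_of_le_ofReal zero_le_one (by simpa using this)

lemma single0 (c : ℝ) (w : ℝ≥0) :
    ∫ z, stdNormalCDF (c + z) ∂(gaussianReal 0 w)
      = stdNormalCDF (c / Real.sqrt (1 + (w : ℝ))) := by
  by_cases hw : w = 0
  · simp [hw, integral_dirac]
  · set μ := gaussianReal 0 w
    set ν := gaussianReal 0 1
    have hSm : MeasurableSet {p : ℝ × ℝ | p.2 - p.1 ≤ c} :=
      measurableSet_le (measurable_snd.sub measurable_fst) measurable_const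
    have hsub : Measurable (fun p : ℝ × ℝ => p.2 - p.1) := measurable_snd.sub measurable_fst
    have h1 : ∫ z, stdNormalCDF (c + z) ∂μ
        = ((μ.prod ν) {p : ℝ × ℝ | p.2 - p.1 ≤ c}).toReal := by
      rw [Measure.prod_apply hSm]
      have hset : ∀ x : ℝ, (Prod.mk x ⁻¹' {p : ℝ × ℝ | p.2 - p.1 ≤ c}) = Set.Iic (c + x) := by
        intro x; ext y; simp [sub_le_iff_le_add, add_comm]
      simp_rw [hset]
      have hmono : Monotone (fun x : ℝ => ν (Set.Iic (c + x))) := fun x y hxy =>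
        measure_mono (Set.Iic_subset_Iic.2 (add_le_add_right hxy c))
      have hmeasf : AEMeasurable (fun x : ℝ => ν (Set.Iic (c + x))) μ :=
        hmono.measurable.aemeasurable
      have hlt : ∀ᵐ x ∂μ, ν (Set.Iic (c + x)) < ⊤ := ae_of_all _ fun x => measure_lt_top _ _
      rw [← integral_toReal hmeasf hlt]
      rfl
    have h2 : (μ.prod ν) {p : ℝ × ℝ | p.2 - p.1 ≤ c}
        = gaussianReal 0 (w + 1) (Set.Iic c) := by
      have hpre : {p : ℝ × ℝ | p.2 - p.1 ≤ c}
          = (fun p : ℝ × ℝ => p.2 - p.1) ⁻¹' Set.Iic c := rfl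
      rw [hpre, ← Measure.map_apply hsub measurableSet_Iic]
      have hneg : Measure.map (fun x : ℝ => -x) μ = μ := by
        have := gaussianReal_map_const_mul (μ := 0) (v := w) (-1)
        simp only [neg_one_mul, mul_zero] at this
        rw [this]
        congr 1
        ext
        norm_num
      have hmm : Measure.map (Prod.map (fun x : ℝ => -x) id) (μ.prod ν)
          = (Measure.map (fun x : ℝ => -x) μ).prod (Measure.map id ν) :=
        (Measure.map_prod_map _ _ measurable_neg measurable_id).symm
      rw [Measure.map_id] at hmm
      have hcomp : (fun p : ℝ × ℝ => p.2 - p.1)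
          = (fun p : ℝ × ℝ => p.1 + p.2) ∘ (Prod.map (fun x : ℝ => -x) id) := by
        funext p; simp [Prod.map, sub_eq_neg_add, add_comm]
      rw [hcomp, ← Measure.map_map (g := fun p : ℝ × ℝ => p.1 + p.2) (f := Prod.map (fun x : ℝ => -x) id) (measurable_fst.add measurable_snd)
        (measurable_neg.prodMap measurable_id), hmm, hneg, gauss_conv w 1 hw one_ne_zero]
    have h3 : gaussianReal 0 (w + 1) (Set.Iic c)
        = ν (Set.Iic (c / Real.sqrt (1 + (w : ℝ)))) := by
      set s := Real.sqrt (1 + (w : ℝ)) with hs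
      have hspos : 0 < s := Real.sqrt_pos.2 (by positivity)
      have hmap : Measure.map (fun x => s * x) ν = gaussianReal 0 (w + 1) := by
        rw [gaussianReal_map_const_mul]
        congr 1
        · ring
        · ext
          push_cast
          rw [Real.sq_sqrt (by positivity)]
          ring
      rw [← hmap, Measure.map_apply (measurable_const_mul s) measurableSet_Iic]
      congr 1
      ext x
      simp only [Set.mem_preimage, Set.mem_Iic]
      rw [le_div_iff₀ hspos, mul_comm]
    rw [h1, h2, h3]; rfl

lemma single (c l : ℝ) (v : ℝ≥0) :
    ∫ y, stdNormalCDF (c + l * y) ∂(gaussianReal 0 v)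
      = stdNormalCDF (c / Real.sqrt (1 + l ^ 2 * (v : ℝ))) := by
  have hmap : Measure.map (fun y => l * y) (gaussianReal 0 v)
      = gaussianReal 0 (⟨l ^ 2, sq_nonneg _⟩ * v) := by
    rw [gaussianReal_map_const_mul]; congr 1; ring
  have h1 : ∫ y, stdNormalCDF (c + l * y) ∂(gaussianReal 0 v)
      = ∫ z, stdNormalCDF (c + z) ∂(gaussianReal 0 (⟨l ^ 2, sq_nonneg _⟩ * v)) := by
    rw [← hmap]
    exact (integral_map (measurable_const_mul l).aemeasurable
      ((stdNormalCDF_meas.comp (measurable_const_add c) :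
        Measurable fun z => stdNormalCDF (c + z)).aestronglyMeasurable)).symm
  rw [h1, single0]
  norm_num [NNReal.coe_mul]
  rfl

lemma key (T : ℕ) : ∀ (c : ℝ) (lam : Fin T → ℝ) (σt : Fin T → ℝ≥0),
    ∫ x, stdNormalCDF (c + ∑ t, lam t * x t)
        ∂Measure.pi (fun t => gaussianReal 0 (σt t ^ 2))
      = stdNormalCDF (c / Real.sqrt (1 + ∑ t, lam t ^ 2 * (σt t : ℝ) ^ 2)) := by
  induction T with
  | zero => intro c lam σt; simp
  | succ n ih =>
    intro c lam σt
    set μs := fun t : Fin (n + 1) => gaussianReal 0 (σt t ^ 2) with hμs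
    have hmp := measurePreserving_piFinSuccAbove μs 0
    set g : ℝ × (Fin n → ℝ) → ℝ := fun p =>
      stdNormalCDF (c + lam 0 * p.1 + ∑ j, lam (Fin.succAbove 0 j) * p.2 j) with hg
    have hgmeas : Measurable g := by
      apply stdNormalCDF_meas.comp
      exact ((measurable_const.add (measurable_fst.const_mul (lam 0))).add
        (Finset.univ.measurable_sum fun j _ =>
          ((measurable_pi_apply j).comp measurable_snd).const_mul _))
    have hgint : Integrable g
        ((μs 0).prod (Measure.pi fun j => μs (Fin.succAbove 0 j))) := by
      refine Integrable.mono' (integrable_const 1) hgmeas.aestronglyMeasurable ?_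
      refine ae_of_all _ fun p => ?_
      rw [Real.norm_eq_abs, abs_of_nonneg (stdNormalCDF_nonneg _)]
      exact stdNormalCDF_le_one _
    have step1 : ∫ x, stdNormalCDF (c + ∑ t, lam t * x t) ∂Measure.pi μs
        = ∫ p, g p ∂((μs 0).prod (Measure.pi fun j => μs (Fin.succAbove 0 j))) := by
      refine Eq.trans ?_ (hmp.integral_comp' g)
      refine integral_congr_ae (ae_of_all _ fun x => ?_)
      simp only [hg, MeasurableEquiv.piFinSuccAbove_apply, Fin.insertNthEquiv_symm_apply,
        Fin.removeNth]
      rw [Fin.sum_univ_succAbove (fun t => lam t * x t) 0, add_assoc]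
    set S' : ℝ := ∑ j, lam (Fin.succAbove 0 j) ^ 2 * (σt (Fin.succAbove 0 j) : ℝ) ^ 2 with hS'
    have hS'nonneg : 0 ≤ S' := Finset.sum_nonneg fun j _ => by positivity
    have h1S : (0:ℝ) < 1 + S' := by positivity
    have hin : ∀ x0 : ℝ, ∫ y, g (x0, y) ∂(Measure.pi fun j => μs (Fin.succAbove 0 j))
        = stdNormalCDF ((c + lam 0 * x0) / Real.sqrt (1 + S')) :=
      fun x0 => ih (c + lam 0 * x0) (fun j => lam (Fin.succAbove 0 j))
        (fun j => σt (Fin.succAbove 0 j))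
    have step2 : ∫ p, g p ∂((μs 0).prod (Measure.pi fun j => μs (Fin.succAbove 0 j)))
        = ∫ x0, stdNormalCDF ((c + lam 0 * x0) / Real.sqrt (1 + S')) ∂(μs 0) := by
      rw [integral_prod _ hgint]
      exact integral_congr_ae (ae_of_all _ fun x0 => hin x0)
    have hdiv : ∀ x0 : ℝ, (c + lam 0 * x0) / Real.sqrt (1 + S')
        = c / Real.sqrt (1 + S') + (lam 0 / Real.sqrt (1 + S')) * x0 := by
      intro x0; rw [add_div, mul_div_right_comm]
    have step3 : ∫ x0, stdNormalCDF ((c + lam 0 * x0) / Real.sqrt (1 + S')) ∂(μs 0)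
        = stdNormalCDF ((c / Real.sqrt (1 + S')) /
            Real.sqrt (1 + (lam 0 / Real.sqrt (1 + S')) ^ 2 * ((σt 0 ^ 2 : ℝ≥0) : ℝ))) := by
      simp_rw [hdiv]
      exact single _ _ _
    rw [step1, step2, step3]
    congr 1
    have hcoe : ((σt 0 ^ 2 : ℝ≥0) : ℝ) = (σt 0 : ℝ) ^ 2 := by push_cast; ring
    have hsum2 : (∑ t, lam t ^ 2 * (σt t : ℝ) ^ 2)
        = lam 0 ^ 2 * (σt 0 : ℝ) ^ 2 + S' :=
      Fin.sum_univ_succAbove (fun t => lam t ^ 2 * (σt t : ℝ) ^ 2) 0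
    rw [hcoe, hsum2, div_div]
    congr 1
    rw [← Real.sqrt_mul h1S.le]
    congr 1
    rw [div_pow, Real.sq_sqrt h1S.le]
    field_simp
    ring

/-- probit-Gaussian orthogonalized marginalization: with independent
Gaussian residuals εₜ ~ N(0, σₜ²) and conditional probit model
P(Y=1|Ā,X̃) = Φ(α + βᵀĀ + λᵀX̃), the g-formula yields
ψ(ā) = Φ((α + βᵀā)/√(1+σ²)) with σ² = Σₜ λₜ²σₜ². -/
theorem stmt10 {T : ℕ} (α : ℝ) (β lam : Fin T → ℝ) (σt : Fin T → ℝ≥0)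
    (ψ : (Fin T → ℝ) → ℝ)
    (hψ : ψ = fun a =>
      ∫ x, stdNormalCDF (α + ∑ t, β t * a t + ∑ t, lam t * x t)
        ∂Measure.pi (fun t => gaussianReal 0 ((σt t) ^ 2)))
    (σ2 : ℝ) (hσ2 : σ2 = ∑ t, (lam t) ^ 2 * ((σt t : ℝ)) ^ 2) :
    ∀ a, ψ a = stdNormalCDF ((α + ∑ t, β t * a t) / Real.sqrt (1 + σ2)) := by
  intro a
  rw [hψ, hσ2]
  exact key T (α + ∑ t, β t * a t) lam σt
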